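/- If the binary digit sequence of r is eventually periodic, then the hexagonal lattice path W(r) is either unbounded with positions after successive periods lying on an arithmetic progression k·D + C (case: net turn per period ≡ 0 mod 6 and D ≠ 0), or bounded and visiting only finitely many lattice points (all other cases). -/

import Mathlib

open Finset

noncomputable def ω : ℂ := Complex.exp (Real.pi * Complex.I / 3)

def dir (d0 : ℤ) (z : ℕ → Fin 2) : ℕ → ℤ
  | 0 => d0
  | n + 1 => dir d0 z n + (if z n = 0 then 1 else -1)

noncomputable def pos (d0 : ℤ) (z : ℕ → Fin 2) : ℕ → ℂ
  | 0 => 0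
  | n + 1 => pos d0 z n + ω ^ dir d0 z (n + 1)

lemma omega_ne : ω ≠ 0 := Complex.exp_ne_zero _

lemma omega_pow_six : ω ^ (6 : ℕ) = 1 := by
  rw [ω, ← Complex.exp_nat_mul]
  have : (6 : ℕ) * (↑Real.pi * Complex.I / 3) = 2 * ↑Real.pi * Complex.I := by
    push_cast; ring
  rw [this, Complex.exp_two_pi_mul_I]

lemma omega_zpow' (t : ℤ) : ω ^ t = Complex.exp (t * (Real.pi * Complex.I / 3)) := by
  rw [Complex.exp_int_mul, ω]

lemma omega_zpow_eq_one_iff (t : ℤ) : ω ^ t = 1 ↔ (6 : ℤ) ∣ t := by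
  rw [omega_zpow', Complex.exp_eq_one_iff]
  constructor
  · rintro ⟨n, hn⟩
    refine ⟨n, ?_⟩
    have hpi : (Real.pi : ℂ) * Complex.I ≠ 0 := by
      simp [Real.pi_ne_zero, Complex.I_ne_zero]
    have h3 : (t : ℂ) * (Real.pi * Complex.I) = (6 * n) * (Real.pi * Complex.I) := by
      linear_combination 3 * hn
    have : (t : ℂ) = 6 * n := mul_right_cancel₀ hpi h3
    exact_mod_cast this
  · rintro ⟨c, rfl⟩
    exact ⟨c, by push_cast; ring⟩

lemma dir_add (d0 : ℤ) (z : ℕ → Fin 2) (a b : ℕ) :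
    dir d0 z (a + b) = dir d0 z a + ∑ j ∈ Ico a (a + b), (if z j = 0 then (1:ℤ) else -1) := by
  induction b with
  | zero => simp
  | succ b ih =>
    have e : a + (b + 1) = (a + b) + 1 := by omega
    rw [e, dir, ih, Finset.sum_Ico_succ_top (by omega : a ≤ a + b)]
    ring

theorem eventually_periodic_dichotomy (d0 : ℤ) (z : ℕ → Fin 2) (N p : ℕ) (hp : 1 ≤ p)
    (hper : ∀ i ≥ N, z (i + p) = z i)
    (t : ℤ)
    (ht : t = (((Finset.Ico N (N + p)).filter (fun j => z j = 0)).card : ℤ)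
            - (((Finset.Ico N (N + p)).filter (fun j => z j = 1)).card : ℤ))
    (D : ℂ) (hD : D = pos d0 z (N + p) - pos d0 z N) :
    ((6 : ℤ) ∣ t ∧ D ≠ 0 ∧ (∃ C : ℂ, ∀ k : ℕ, pos d0 z (N + k * p) = (k : ℂ) * D + C) ∧
      ¬ ∃ M : ℝ, ∀ n, ‖pos d0 z n‖ ≤ M) ∨
    ((∃ M : ℝ, ∀ n, ‖pos d0 z n‖ ≤ M) ∧ (Set.range (pos d0 z)).Finite) := by
  -- t equals the net turn over one period
  have ht' : dir d0 z (N + p) = dir d0 z N + t := by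
    rw [dir_add, ht]
    congr 1
    rw [← Finset.sum_filter_add_sum_filter_not (Ico N (N + p)) (fun j => z j = 0)]
    have h1 : ∑ j ∈ (Ico N (N+p)).filter (fun j => z j = 0), (if z j = 0 then (1:ℤ) else -1)
        = ((Ico N (N+p)).filter (fun j => z j = 0)).card := by
      trans ∑ _j ∈ (Ico N (N+p)).filter (fun j => z j = 0), (1:ℤ)
      · apply Finset.sum_congr rfl
        intro j hj
        simp only [Finset.mem_filter] at hj
        simp [hj.2]
      · simp
    have hflt : (Ico N (N+p)).filter (fun j => ¬ z j = 0)
        = (Ico N (N+p)).filter (fun j => z j = 1) := by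
      apply Finset.filter_congr
      intro j _
      have : ∀ a : Fin 2, (¬ a = 0) ↔ a = 1 := by decide
      simp [this]
    have h2 : ∑ j ∈ (Ico N (N+p)).filter (fun j => ¬ z j = 0), (if z j = 0 then (1:ℤ) else -1)
        = -(((Ico N (N+p)).filter (fun j => z j = 1)).card : ℤ) := by
      rw [hflt]
      trans ∑ _j ∈ (Ico N (N+p)).filter (fun j => z j = 1), (-1:ℤ)
      · apply Finset.sum_congr rfl
        intro j hj
        simp only [Finset.mem_filter] at hj
        have : ¬ z j = 0 := by rw [hj.2]; decide
        simp [this]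
      · simp
    rw [h1, h2]
    ring
  -- dir is shifted by t after one period
  have hdir : ∀ m : ℕ, dir d0 z (N + m + p) = dir d0 z (N + m) + t := by
    intro m
    induction m with
    | zero => simpa using ht'
    | succ m ih =>
      have e : N + (m + 1) + p = (N + m + p) + 1 := by omega
      have e2 : N + (m + 1) = (N + m) + 1 := by omega
      rw [e, e2, dir, dir, ih, hper (N + m) (by omega)]
      ring
  -- one-period position relation
  set u : ℂ := ω ^ t with hu
  have key1 : ∀ m : ℕ, pos d0 z (N + m + p)
      = pos d0 z (N + p) + u * (pos d0 z (N + m) - pos d0 z N) := by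
    intro m
    induction m with
    | zero => simp
    | succ m ih =>
      have e : N + (m + 1) + p = (N + m + p) + 1 := by omega
      have e2 : N + (m + 1) = (N + m) + 1 := by omega
      have hd : dir d0 z (N + m + p + 1) = dir d0 z (N + m + 1) + t := by
        have := hdir (m + 1)
        rw [(by omega : N + (m+1) + p = N + m + p + 1), (by omega : N + (m+1) = N + m + 1)] at this
        exact this
      rw [e, e2, pos, pos, ih, hd, zpow_add₀ omega_ne, hu]
      ring
  set B : ℂ := pos d0 z (N + p) - u * pos d0 z N with hB
  have key : ∀ k m : ℕ, pos d0 z (N + m + k * p)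
      = (∑ j ∈ range k, u ^ j) * B + u ^ k * pos d0 z (N + m) := by
    intro k
    induction k with
    | zero => intro m; simp
    | succ k ih =>
      intro m
      have e : N + m + (k + 1) * p = N + (m + k * p) + p := by ring
      rw [e, key1 (m + k * p), (by omega : N + (m + k * p) = N + m + k * p), ih m,
        geom_sum_succ]
      ring
  have hu6 : u ^ (6:ℕ) = 1 := by
    rw [hu, ← zpow_natCast, ← zpow_mul, mul_comm, zpow_mul, zpow_natCast, omega_pow_six, one_zpow]
  by_cases hA : (6 : ℤ) ∣ t ∧ D ≠ 0
  · -- unbounded arithmetic case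
    obtain ⟨h6, hD0⟩ := hA
    have hu1 : u = 1 := (omega_zpow_eq_one_iff t).2 h6
    have harith : ∀ k : ℕ, pos d0 z (N + k * p) = (k : ℂ) * D + pos d0 z N := by
      intro k
      have := key k 0
      rw [(by omega : N + 0 + k * p = N + k * p), (by omega : N + 0 = N)] at this
      rw [this, hu1, hB, hu1, hD]
      simp
    refine Or.inl ⟨h6, hD0, ⟨pos d0 z N, harith⟩, ?_⟩
    rintro ⟨M, hM⟩
    set C := pos d0 z N
    have habsD : 0 < ‖D‖ := by simpa using hD0
    obtain ⟨k, hk⟩ := exists_nat_gt ((M + ‖C‖) / ‖D‖)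
    have hk' : M + ‖C‖ < k * ‖D‖ := by
      rwa [div_lt_iff₀ habsD] at hk
    have h1 : ‖(k : ℂ) * D‖ - ‖C‖ ≤ ‖(k:ℂ) * D + C‖ := by
      simpa [sub_neg_eq_add] using norm_sub_norm_le ((k:ℂ)*D) (-C)
    have h2 : ‖(k : ℂ) * D‖ = k * ‖D‖ := by
      rw [norm_mul, Complex.norm_natCast]
    have := hM (N + k * p)
    rw [harith k] at this
    linarith
  · -- bounded case
    refine Or.inr ?_
    -- S6 * B = 0
    have hSB : (∑ j ∈ range 6, u ^ j) * B = 0 := by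
      by_cases hu1 : u = 1
      · have h6 : (6 : ℤ) ∣ t := (omega_zpow_eq_one_iff t).1 (hu.symm.trans hu1 ▸ hu1)
        have hD0 : D = 0 := by
          by_contra hc; exact hA ⟨h6, hc⟩
        have : B = 0 := by rw [hB, hu1, one_mul, ← hD, hD0]
        rw [this, mul_zero]
      · have : (∑ j ∈ range 6, u ^ j) * (u - 1) = u ^ (6:ℕ) - 1 := geom_sum_mul u 6
        have hS : (∑ j ∈ range 6, u ^ j) = 0 := by
          have h0 : (∑ j ∈ range 6, u ^ j) * (u - 1) = 0 := by rw [this, hu6, sub_self]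
          rcases mul_eq_zero.1 h0 with h | h
          · exact h
          · exact absurd (sub_eq_zero.1 h) hu1
        rw [hS, zero_mul]
    have hper6 : ∀ n, N ≤ n → pos d0 z (n + 6 * p) = pos d0 z n := by
      intro n hn
      have := key 6 (n - N)
      rw [(by omega : N + (n - N) + 6 * p = n + 6 * p), (by omega : N + (n - N) = n)] at this
      rw [this, hSB, hu6]
      ring
    have hrange : Set.range (pos d0 z) ⊆ pos d0 z '' (Set.Iio (N + 6 * p)) := by
      rintro x ⟨n, rfl⟩
      induction n using Nat.strong_induction_on with
      | _ n ih =>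
        by_cases h : n < N + 6 * p
        · exact ⟨n, h, rfl⟩
        · have hn : N ≤ n - 6 * p := by omega
          have : pos d0 z n = pos d0 z (n - 6 * p) := by
            rw [← hper6 (n - 6 * p) hn, (by omega : n - 6 * p + 6 * p = n)]
          rw [this]
          exact ih (n - 6 * p) (by omega)
    have hfin : (Set.range (pos d0 z)).Finite :=
      Set.Finite.subset ((Set.finite_Iio _).image _) hrange
    refine ⟨?_, hfin⟩
    have hfin2 : ((fun x : ℂ => ‖x‖) '' Set.range (pos d0 z)).Finite := hfin.image _
    obtain ⟨M, hM⟩ := hfin2.bddAbove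
    exact ⟨M, fun n => hM ⟨pos d0 z n, ⟨n, rfl⟩, rfl⟩⟩
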